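/- For every odd prime p, the number of 𝔽_p-rational points of the Fermat quartic surface F equals p² + 1 + 9p + 7·χ(−1)·p + 2·χ(2)·p + 2·χ(−2)·p + a_p, where a_p = 0 if p ≡ 3 (mod 4), and a_p = (∑_{x ∈ 𝔽_p} χ(x³ − x))² − 2p if p ≡ 1 (mod 4). -/

import Mathlib

open scoped LinearAlgebra.Projectivization

/-- The Fermat quartic condition on `ℙ³`: `z₀⁴ - z₁⁴ + z₂⁴ - z₃⁴ = 0`. -/
def FermatCond {F : Type*} [Field F] (z : Fin 4 → F) : Prop :=
  z 0 ^ 4 - z 1 ^ 4 + z 2 ^ 4 - z 3 ^ 4 = 0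

open Finset

set_option linter.unusedSectionVars false
set_option linter.unusedVariables false
set_option maxHeartbeats 1000000

namespace FermatQuarticAux

/-! ### Character sum definitions -/

/-- The cubic character sum `W s = ∑ χ(x³ - s x)`. -/
def Wsum (F : Type*) [Field F] [Fintype F] [DecidableEq F] (s : F) : ℤ :=
  ∑ x : F, quadraticChar F (x ^ 3 - s * x)

/-- The hyperbola character sum `D s = ∑_{x² - y² = s} χ(x y)`. -/
def Dsum (F : Type*) [Field F] [Fintype F] [DecidableEq F] (s : F) : ℤ :=
  ∑ x : F, ∑ y : F, if x ^ 2 - y ^ 2 = s then quadraticChar F (x * y) else 0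

/-- The weighted hyperbola count `L s = ∑_{x² - y² = s} (χ x + 1)(χ y + 1)`. -/
def Lsum (F : Type*) [Field F] [Fintype F] [DecidableEq F] (s : F) : ℤ :=
  ∑ x : F, ∑ y : F,
    if x ^ 2 - y ^ 2 = s then (quadraticChar F x + 1) * (quadraticChar F y + 1) else 0

section General
variable {F : Type*} [Field F] [Fintype F] [DecidableEq F] (hF : ringChar F ≠ 2)

local notation "χ" => quadraticChar F
local notation "q" => (Fintype.card F : ℤ)

/-! ### Lemmas not needing odd characteristic -/

lemma sum_ite_ne_zero (c : ℤ) : ∑ x : F, (if x = 0 then 0 else c) = (q - 1) * c := by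
  rw [Finset.sum_ite, Finset.sum_const, Finset.sum_const]
  rw [Finset.filter_eq', if_pos (mem_univ _)]
  have h : (univ.filter fun x : F => ¬x = 0).card = Fintype.card F - 1 := by
    rw [Finset.filter_not, Finset.filter_eq', if_pos (mem_univ _)]
    rw [Finset.card_sdiff]
    simp
  rw [h, Finset.card_singleton]
  have hq : 1 ≤ Fintype.card F := Fintype.card_pos
  rw [nsmul_eq_mul, nsmul_eq_mul, Nat.cast_sub hq]
  push_cast
  ring

lemma sum_neg_reindex (g : F → ℤ) : ∑ s : F, g (-s) = ∑ s : F, g s :=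
  Fintype.sum_equiv (Equiv.neg F) _ _ (fun s => rfl)

lemma L_neg (s : F) : Lsum F (-s) = Lsum F s := by
  unfold Lsum
  rw [Finset.sum_comm]
  refine Finset.sum_congr rfl fun x _ => Finset.sum_congr rfl fun y _ => ?_
  rw [show (χ y + 1) * (χ x + 1) = (χ x + 1) * (χ y + 1) from mul_comm _ _]
  refine if_congr ?_ rfl rfl
  constructor
  · intro h; linear_combination -h
  · intro h; linear_combination -h

lemma D_collapse (g : F → ℤ) :
    ∑ s : F, Dsum F s * g s = ∑ x : F, ∑ y : F, χ (x * y) * g (x ^ 2 - y ^ 2) := by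
  unfold Dsum
  have h1 : ∀ s : F, (∑ x : F, ∑ y : F, if x ^ 2 - y ^ 2 = s then χ (x * y) else 0) * g s
      = ∑ x : F, ∑ y : F, (if x ^ 2 - y ^ 2 = s then χ (x * y) * g s else 0) := by
    intro s
    rw [Finset.sum_mul]
    refine Finset.sum_congr rfl fun x _ => ?_
    rw [Finset.sum_mul]
    refine Finset.sum_congr rfl fun y _ => ?_
    rw [ite_mul, zero_mul]
  rw [Finset.sum_congr rfl fun s _ => h1 s, Finset.sum_comm]
  refine Finset.sum_congr rfl fun x _ => ?_
  rw [Finset.sum_comm]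
  refine Finset.sum_congr rfl fun y _ => ?_
  rw [Finset.sum_ite_eq univ (x ^ 2 - y ^ 2) (fun s => χ (x * y) * g s), if_pos (mem_univ _)]

/-! ### Basic character sum evaluations -/

include hF

lemma sum_sqrt_count (t : F) : ∑ x : F, (if x ^ 2 = t then (1 : ℤ) else 0) = χ t + 1 := by
  rw [Finset.sum_boole, ← quadraticChar_card_sqrts hF t]
  congr 1
  rw [← Set.toFinset_setOf]

lemma sum_sq (f : F → ℤ) : ∑ x : F, f (x ^ 2) = ∑ y : F, (χ y + 1) * f y := by
  have h1 : ∀ x : F, f (x ^ 2) = ∑ y : F, if x ^ 2 = y then f y else 0 := by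
    intro x
    rw [Finset.sum_ite_eq univ (x ^ 2) f, if_pos (mem_univ _)]
  calc ∑ x : F, f (x ^ 2) = ∑ x : F, ∑ y : F, if x ^ 2 = y then f y else 0 := by
        exact Finset.sum_congr rfl fun x _ => h1 x
    _ = ∑ y : F, ∑ x : F, if x ^ 2 = y then f y else 0 := Finset.sum_comm
    _ = ∑ y : F, (χ y + 1) * f y := by
        refine Finset.sum_congr rfl fun y _ => ?_
        have : ∀ x : F, (if x ^ 2 = y then f y else 0)
            = (if x ^ 2 = y then (1 : ℤ) else 0) * f y := by
          intro x; split <;> simp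
        rw [Finset.sum_congr rfl fun x _ => this x, ← Finset.sum_mul, sum_sqrt_count hF]

lemma sum_mul_shift (t : F) :
    ∑ x : F, χ (x * (x + t)) = if t = 0 then q - 1 else -1 := by
  rcases eq_or_ne t 0 with rfl | ht
  · rw [if_pos rfl]
    have h1 : ∀ x : F, χ (x * (x + 0)) = if x = 0 then 0 else 1 := by
      intro x
      rcases eq_or_ne x 0 with rfl | hx
      · simp
      · rw [if_neg hx, add_zero, ← sq, quadraticChar_sq_one' hx]
    rw [Finset.sum_congr rfl fun x _ => h1 x]
    rw [show ((q - 1 : ℤ)) = (q - 1) * 1 by ring]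
    exact sum_ite_ne_zero 1
  · rw [if_neg ht]
    have h0 : χ ((0:F) * (0 + t)) = 0 := by simp
    rw [← Finset.sum_erase (f := fun x : F => χ (x * (x + t))) univ h0]
    rw [Finset.sum_nbij' (i := fun x => 1 + t * x⁻¹) (j := fun y => t * (y - 1)⁻¹)
      (t := univ.erase 1) (g := fun y => χ y) ?_ ?_ ?_ ?_ ?_]
    · rw [Finset.sum_erase_eq_sub (mem_univ (1:F)), quadraticChar_sum_zero hF, map_one]
      norm_num
    · intro a ha
      have ha0 : a ≠ 0 := by simpa using (Finset.mem_erase.mp ha).1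
      refine Finset.mem_erase.mpr ⟨?_, mem_univ _⟩
      intro h
      have h2 : t * a⁻¹ = 0 := by linear_combination h
      rcases mul_eq_zero.mp h2 with h' | h'
      · exact ht h'
      · exact absurd h' (inv_ne_zero ha0)
    · intro b hb
      have hb1 : b ≠ 1 := by simpa using (Finset.mem_erase.mp hb).1
      refine Finset.mem_erase.mpr ⟨?_, mem_univ _⟩
      exact mul_ne_zero ht (inv_ne_zero (sub_ne_zero.mpr hb1))
    · intro a ha
      have ha0 : a ≠ 0 := by simpa using (Finset.mem_erase.mp ha).1
      field_simp
      simp [ht]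
    · intro b hb
      have hb1 : b ≠ 1 := by simpa using (Finset.mem_erase.mp hb).1
      have : b - 1 ≠ 0 := sub_ne_zero.mpr hb1
      field_simp
      ring
    · intro a ha
      have ha0 : a ≠ 0 := by simpa using (Finset.mem_erase.mp ha).1
      have key : a * (a + t) = a ^ 2 * (1 + t * a⁻¹) := by field_simp
      rw [key, map_mul, quadraticChar_sq_one' ha0, one_mul]

lemma sum_shift (a : F) : ∑ s : F, χ (s - a) = 0 :=
  (Fintype.sum_equiv (Equiv.subRight a) _ (fun t => χ t) (fun s => rfl)).trans
    (quadraticChar_sum_zero hF)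

lemma sum_sq_add (t : F) : ∑ x : F, χ (x ^ 2 + t) = if t = 0 then q - 1 else -1 := by
  rw [show (∑ x : F, χ (x ^ 2 + t)) = ∑ x : F, (fun y => χ (y + t)) (x ^ 2) from rfl,
    sum_sq hF (fun y => χ (y + t))]
  have h2 : ∀ y : F, (χ y + 1) * χ (y + t) = χ (y * (y + t)) + χ (y + t) := by
    intro y; rw [map_mul]; ring
  rw [Finset.sum_congr rfl fun y _ => h2 y, Finset.sum_add_distrib]
  have h3 : ∑ y : F, χ (y + t) = 0 :=
    (Fintype.sum_equiv (Equiv.addRight t) _ (fun z => χ z) (fun s => rfl)).trans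
      (quadraticChar_sum_zero hF)
  rw [h3, add_zero, sum_mul_shift hF t]

lemma sum_quad_roots (v w : F) :
    ∑ s : F, χ ((s - v) * (s - w)) = if v = w then q - 1 else -1 := by
  have h : ∀ s : F, χ ((s + v - v) * (s + v - w)) = χ (s * (s + (v - w))) := by
    intro s; congr 1; ring
  calc ∑ s : F, χ ((s - v) * (s - w))
      = ∑ s : F, χ ((s + v - v) * (s + v - w)) :=
        (Fintype.sum_equiv (Equiv.addRight v) _ _ (fun s => rfl)).symm
    _ = ∑ s : F, χ (s * (s + (v - w))) := Finset.sum_congr rfl fun s _ => h s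
    _ = if v = w then q - 1 else -1 := by rw [sum_mul_shift hF (v - w)]; simp [sub_eq_zero]

lemma sum_chi_mul : ∑ x : F, ∑ y : F, χ (x * y) = 0 := by
  have h : ∀ x : F, ∑ y : F, χ (x * y) = χ x * ∑ y : F, χ y := by
    intro x
    rw [Finset.mul_sum]
    exact Finset.sum_congr rfl fun y _ => map_mul _ _ _
  rw [Finset.sum_congr rfl fun x _ => h x, quadraticChar_sum_zero hF]
  simp

/-! ### Pair sums and special values -/

lemma sum_pair_sqrt {c : F} (hc : c ≠ 0) (g : F → ℤ) :
    ∑ y : F, (if y ^ 2 = c ^ 2 then g y else 0) = g c + g (-c) := by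
  rw [← Finset.sum_filter]
  have hfil : univ.filter (fun y : F => y ^ 2 = c ^ 2) = {c, -c} := by
    ext y
    simp [sq_eq_sq_iff_eq_or_eq_neg]
  have hne : c ≠ -c := by
    intro h
    exact hc ((Ring.eq_self_iff_eq_zero_of_char_ne_two hF).mp h.symm)
  rw [hfil, Finset.sum_pair hne]

lemma pair_diag :
    ∑ x : F, ∑ y : F, (if y ^ 2 = x ^ 2 then χ (x * y) else 0) = (q - 1) * (1 + χ (-1)) := by
  have h : ∀ x : F, (∑ y : F, if y ^ 2 = x ^ 2 then χ (x * y) else 0)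
      = if x = 0 then 0 else 1 + χ (-1) := by
    intro x
    rcases eq_or_ne x 0 with rfl | hx
    · rw [if_pos rfl]
      refine Finset.sum_eq_zero fun y _ => ?_
      split <;> simp
    · rw [if_neg hx, sum_pair_sqrt hF hx (fun y => χ (x * y))]
      rw [show x * x = x ^ 2 by ring, quadraticChar_sq_one' hx]
      rw [show x * -x = -1 * x ^ 2 by ring, map_mul, quadraticChar_sq_one' hx, mul_one]
  rw [Finset.sum_congr rfl fun x _ => h x, sum_ite_ne_zero]

lemma chi_sqrt_neg_one {i : F} (hi : (-1 : F) = i * i) : χ i = χ 2 := by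
  have h2 : (2 : F) ≠ 0 := Ring.two_ne_zero hF
  have h1i : (1 : F) + i ≠ 0 := by
    intro h
    have hieq : i = -1 := by linear_combination h
    rw [hieq] at hi
    exact h2 (by linear_combination -hi)
  have key : ((1 : F) + i) ^ 2 = 2 * i := by linear_combination -hi
  have hchi := quadraticChar_sq_one' (F := F) h1i
  rw [key, map_mul] at hchi
  have h2sq := quadraticChar_sq_one (F := F) h2
  calc χ i = χ 2 ^ 2 * χ i := by rw [h2sq, one_mul]
    _ = χ 2 * (χ 2 * χ i) := by ring
    _ = χ 2 := by rw [hchi, mul_one]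

lemma B0_eval :
    ∑ x : F, ∑ y : F, (if x ^ 2 = -y ^ 2 then χ (-(x * y)) else 0)
      = (q - 1) * (χ 2 + χ (-2)) := by
  have hm2 : χ (-2) = χ (-1) * χ 2 := by
    rw [← map_mul]; norm_num
  by_cases hsq : IsSquare (-1 : F)
  · obtain ⟨i, hi⟩ := hsq
    have hneg1 : (-1 : F) ≠ 0 := by
      intro h; exact (one_ne_zero : (1 : F) ≠ 0) (by linear_combination -h)
    have hchi1 : χ (-1) = 1 := (quadraticChar_one_iff_isSquare hneg1).mpr ⟨i, hi⟩
    have hi0 : i ≠ 0 := by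
      intro h; rw [h, mul_zero] at hi; exact hneg1 hi
    have h : ∀ x : F, (∑ y : F, if x ^ 2 = -y ^ 2 then χ (-(x * y)) else 0)
        = if x = 0 then 0 else 2 * χ 2 := by
      intro x
      rcases eq_or_ne x 0 with rfl | hx
      · rw [if_pos rfl]
        refine Finset.sum_eq_zero fun y _ => ?_
        split <;> simp
      · rw [if_neg hx]
        have hcong : ∀ y : F, (if x ^ 2 = -y ^ 2 then χ (-(x * y)) else 0)
            = (if y ^ 2 = (i * x) ^ 2 then χ (-(x * y)) else 0) := by
          intro y
          refine if_congr ?_ rfl rfl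
          constructor
          · intro hh; linear_combination hh + x ^ 2 * hi
          · intro hh; linear_combination hh - x ^ 2 * hi
        rw [Finset.sum_congr rfl fun y _ => hcong y,
          sum_pair_sqrt hF (mul_ne_zero hi0 hx) (fun y => χ (-(x * y)))]
        have e1 : -(x * (i * x)) = (-1 * i) * x ^ 2 := by ring
        have e2 : -(x * -(i * x)) = i * x ^ 2 := by ring
        rw [e1, e2, map_mul, map_mul, map_mul, quadraticChar_sq_one' hx, hchi1,
          chi_sqrt_neg_one hF hi]
        ring
    rw [Finset.sum_congr rfl fun x _ => h x, sum_ite_ne_zero, hm2, hchi1]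
    ring
  · have hchi1 : χ (-1) = -1 := quadraticChar_neg_one_iff_not_isSquare.mpr hsq
    have hzero : ∀ x y : F, (if x ^ 2 = -y ^ 2 then χ (-(x * y)) else 0) = 0 := by
      intro x y
      split
      case isTrue h =>
        rcases eq_or_ne y 0 with rfl | hy
        · have : x = 0 := by
            have : x ^ 2 = 0 := by rw [h]; ring
            exact pow_eq_zero_iff (n := 2) (by norm_num) |>.mp this
          simp [this]
        · exfalso
          refine hsq ⟨x * y⁻¹, ?_⟩
          field_simp
          linear_combination -h
      case isFalse => rfl
    simp only [hzero, Finset.sum_const_zero]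
    rw [hm2, hchi1]
    ring

/-! ### `W` and `D` evaluations -/

lemma W_scale {l : F} (hl : l ≠ 0) (t : F) : Wsum F (l ^ 2 * t) = χ l * Wsum F t := by
  unfold Wsum
  have h : ∀ y : F, χ (l ^ 3) * χ (y ^ 3 - t * y)
      = χ (((Equiv.mulLeft₀ l hl) y) ^ 3 - l ^ 2 * t * ((Equiv.mulLeft₀ l hl) y)) := by
    intro y
    rw [← map_mul]
    congr 1
    simp only [Equiv.mulLeft₀_apply]
    ring
  rw [← Fintype.sum_equiv (Equiv.mulLeft₀ l hl)
      (fun y => χ (l ^ 3) * χ (y ^ 3 - t * y))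
      (fun x => χ (x ^ 3 - l ^ 2 * t * x)) h, ← Finset.mul_sum]
  congr 1
  rw [show l ^ 3 = l * l ^ 2 by ring, map_mul, quadraticChar_sq_one' hl, mul_one]

lemma W_zero : Wsum F 0 = 0 := by
  unfold Wsum
  have h : ∀ x : F, χ (x ^ 3 - 0 * x) = χ x := by
    intro x
    rcases eq_or_ne x 0 with rfl | hx
    · simp
    · rw [show x ^ 3 - 0 * x = x * x ^ 2 by ring, map_mul, quadraticChar_sq_one' hx, mul_one]
  rw [Finset.sum_congr rfl fun x _ => h x]
  exact quadraticChar_sum_zero hF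

lemma W_sq_gen (s : F) : Wsum F (s ^ 2) = χ s * Wsum F 1 := by
  rcases eq_or_ne s 0 with rfl | hs
  · simp [W_zero hF]
  · rw [show s ^ 2 = s ^ 2 * 1 by ring, W_scale hF hs]

lemma chi_neg_one_mul_W1 : χ (-1) * Wsum F 1 = Wsum F 1 := by
  unfold Wsum
  nth_rewrite 2 [← sum_neg_reindex (fun x => χ (x ^ 3 - 1 * x))]
  rw [Finset.mul_sum]
  refine Finset.sum_congr rfl fun x _ => ?_
  rw [← map_mul]
  congr 1
  ring

lemma D_zero : Dsum F 0 = (q - 1) * (1 + χ (-1)) := by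
  rw [← pair_diag hF]
  unfold Dsum
  refine Finset.sum_congr rfl fun x _ => Finset.sum_congr rfl fun y _ => ?_
  refine if_congr ?_ rfl rfl
  rw [sub_eq_zero, eq_comm]

lemma D_ne {s : F} (hs : s ≠ 0) : Dsum F s = Wsum F (s ^ 2) - 1 - χ (-1) := by
  have h2 : (2 : F) ≠ 0 := Ring.two_ne_zero hF
  have step1 : Dsum F s = ∑ r ∈ univ.erase (0 : F), χ (r ^ 4 - s ^ 2) := by
    unfold Dsum
    rw [← Fintype.sum_prod_type']
    rw [show (∑ z : F × F, if z.1 ^ 2 - z.2 ^ 2 = s then χ (z.1 * z.2) else 0)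
        = ∑ z ∈ univ.filter (fun z : F × F => z.1 ^ 2 - z.2 ^ 2 = s), χ (z.1 * z.2) from
      (Finset.sum_filter _ _).symm]
    refine Finset.sum_nbij' (i := fun z : F × F => z.1 + z.2)
      (j := fun r : F => ((r + s / r) / 2, (r - s / r) / 2)) ?_ ?_ ?_ ?_ ?_
    · intro z hz
      rw [Finset.mem_filter] at hz
      refine Finset.mem_erase.mpr ⟨?_, mem_univ _⟩
      intro h0
      apply hs
      rw [← hz.2]
      linear_combination (z.1 - z.2) * h0
    · intro r hr
      have hr0 : r ≠ 0 := by simpa using (Finset.mem_erase.mp hr).1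
      refine Finset.mem_filter.mpr ⟨mem_univ _, ?_⟩
      field_simp
      ring
    · intro z hz
      rw [Finset.mem_filter] at hz
      have hz0 : z.1 + z.2 ≠ 0 := by
        intro h0
        apply hs
        rw [← hz.2]
        linear_combination (z.1 - z.2) * h0
      have hdiv : s / (z.1 + z.2) = z.1 - z.2 := by
        rw [div_eq_iff hz0]
        linear_combination -hz.2
      ext
      · show (z.1 + z.2 + s / (z.1 + z.2)) / 2 = z.1
        rw [hdiv]; field_simp; ring
      · show (z.1 + z.2 - s / (z.1 + z.2)) / 2 = z.2
        rw [hdiv]; field_simp; ring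
    · intro r hr
      have hr0 : r ≠ 0 := by simpa using (Finset.mem_erase.mp hr).1
      show (r + s / r) / 2 + (r - s / r) / 2 = r
      field_simp
      ring
    · intro z hz
      rw [Finset.mem_filter] at hz
      have hz0 : z.1 + z.2 ≠ 0 := by
        intro h0
        apply hs
        rw [← hz.2]
        linear_combination (z.1 - z.2) * h0
      have key : (z.1 + z.2) ^ 4 - s ^ 2 = ((z.1 + z.2) * 2) ^ 2 * (z.1 * z.2) := by
        linear_combination (z.1 ^ 2 - z.2 ^ 2 + s) * hz.2
      rw [key, show χ (((z.1 + z.2) * 2) ^ 2 * (z.1 * z.2))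
          = χ (((z.1 + z.2) * 2) ^ 2) * χ (z.1 * z.2) from map_mul _ _ _,
        quadraticChar_sq_one' (mul_ne_zero hz0 h2), one_mul]
  have h0term : χ ((0 : F) ^ 4 - s ^ 2) = χ (-1) := by
    rw [show (0 : F) ^ 4 - s ^ 2 = -1 * s ^ 2 by ring, map_mul,
      quadraticChar_sq_one' hs, mul_one]
  have step2 : ∑ r ∈ univ.erase (0 : F), χ (r ^ 4 - s ^ 2)
      = (∑ r : F, χ (r ^ 4 - s ^ 2)) - χ (-1) := by
    rw [Finset.sum_erase_eq_sub (mem_univ (0 : F)), h0term]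
  have step3 : ∑ r : F, χ (r ^ 4 - s ^ 2) = Wsum F (s ^ 2) - 1 := by
    have e1 : ∀ r : F, χ (r ^ 4 - s ^ 2) = (fun y => χ (y ^ 2 - s ^ 2)) (r ^ 2) := by
      intro r
      show _ = χ ((r ^ 2) ^ 2 - s ^ 2)
      congr 1
      ring
    rw [Finset.sum_congr rfl fun r _ => e1 r, sum_sq hF (fun y => χ (y ^ 2 - s ^ 2))]
    have e2 : ∀ y : F, (χ y + 1) * χ (y ^ 2 - s ^ 2)
        = χ (y ^ 3 - s ^ 2 * y) + χ (y ^ 2 + (-s ^ 2)) := by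
      intro y
      rw [show y ^ 3 - s ^ 2 * y = y * (y ^ 2 - s ^ 2) by ring, map_mul,
        show y ^ 2 + (-s ^ 2) = y ^ 2 - s ^ 2 by ring]
      ring
    rw [Finset.sum_congr rfl fun y _ => e2 y, Finset.sum_add_distrib, sum_sq_add hF (-s ^ 2),
      if_neg (by simpa using pow_ne_zero 2 hs)]
    rw [show Wsum F (s ^ 2) = ∑ x : F, χ (x ^ 3 - s ^ 2 * x) from rfl]
    ring
  rw [step1, step2, step3]

/-! ### Sums over `s` -/

lemma sum_W : ∑ s : F, Wsum F s = 0 := by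
  unfold Wsum
  rw [Finset.sum_comm]
  refine Finset.sum_eq_zero fun x _ => ?_
  have h : ∀ s : F, χ (x ^ 3 - s * x) = χ (-x) * χ (s - x ^ 2) := by
    intro s
    rw [← map_mul]
    congr 1
    ring
  rw [Finset.sum_congr rfl fun s _ => h s, ← Finset.mul_sum, sum_shift hF (x ^ 2), mul_zero]

lemma sum_W_sq : ∑ s : F, Wsum F s ^ 2 = q * (q - 1) * (1 + χ (-1)) := by
  have expand : ∀ s : F, Wsum F s ^ 2
      = ∑ x : F, ∑ y : F, χ (x * y) * χ ((s - x ^ 2) * (s - y ^ 2)) := by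
    intro s
    rw [show Wsum F s ^ 2 = Wsum F s * Wsum F s from sq (Wsum F s), Wsum,
      Finset.sum_mul_sum]
    refine Finset.sum_congr rfl fun x _ => Finset.sum_congr rfl fun y _ => ?_
    rw [← map_mul, ← map_mul]
    congr 1
    ring
  rw [Finset.sum_congr rfl fun s _ => expand s]
  rw [Finset.sum_comm]
  have hswap : ∀ x : F, ∑ s : F, ∑ y : F, χ (x * y) * χ ((s - x ^ 2) * (s - y ^ 2))
      = ∑ y : F, χ (x * y) * ∑ s : F, χ ((s - x ^ 2) * (s - y ^ 2)) := by
    intro x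
    rw [Finset.sum_comm]
    exact Finset.sum_congr rfl fun y _ => (Finset.mul_sum _ _ _).symm
  rw [Finset.sum_congr rfl fun x _ => hswap x]
  have hval : ∀ x y : F, χ (x * y) * (∑ s : F, χ ((s - x ^ 2) * (s - y ^ 2)))
      = q * (if y ^ 2 = x ^ 2 then χ (x * y) else 0) - χ (x * y) := by
    intro x y
    rw [sum_quad_roots hF (x ^ 2) (y ^ 2)]
    by_cases h : x ^ 2 = y ^ 2
    · rw [if_pos h, if_pos h.symm]; ring
    · rw [if_neg h, if_neg (fun hh => h hh.symm)]; ring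
  calc ∑ x : F, ∑ y : F, χ (x * y) * ∑ s : F, χ ((s - x ^ 2) * (s - y ^ 2))
      = ∑ x : F, ∑ y : F, (q * (if y ^ 2 = x ^ 2 then χ (x * y) else 0) - χ (x * y)) := by
        exact Finset.sum_congr rfl fun x _ => Finset.sum_congr rfl fun y _ => hval x y
    _ = q * (∑ x : F, ∑ y : F, if y ^ 2 = x ^ 2 then χ (x * y) else 0)
        - ∑ x : F, ∑ y : F, χ (x * y) := by
        rw [Finset.mul_sum, ← Finset.sum_sub_distrib]
        refine Finset.sum_congr rfl fun x _ => ?_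
        rw [Finset.mul_sum, ← Finset.sum_sub_distrib]
    _ = q * (q - 1) * (1 + χ (-1)) := by
        rw [pair_diag hF, sum_chi_mul hF]
        ring

lemma sum_W_mul_W_neg : ∑ s : F, Wsum F s * Wsum F (-s) = q * (q - 1) * (χ 2 + χ (-2)) := by
  have expand : ∀ s : F, Wsum F s * Wsum F (-s)
      = ∑ x : F, ∑ y : F, χ (-(x * y)) * χ ((s - x ^ 2) * (s - (-y ^ 2))) := by
    intro s
    rw [Wsum, Wsum, Finset.sum_mul_sum]
    refine Finset.sum_congr rfl fun x _ => Finset.sum_congr rfl fun y _ => ?_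
    rw [← map_mul, ← map_mul]
    congr 1
    ring
  rw [Finset.sum_congr rfl fun s _ => expand s]
  rw [Finset.sum_comm]
  have hswap : ∀ x : F, ∑ s : F, ∑ y : F, χ (-(x * y)) * χ ((s - x ^ 2) * (s - (-y ^ 2)))
      = ∑ y : F, χ (-(x * y)) * ∑ s : F, χ ((s - x ^ 2) * (s - (-y ^ 2))) := by
    intro x
    rw [Finset.sum_comm]
    exact Finset.sum_congr rfl fun y _ => (Finset.mul_sum _ _ _).symm
  rw [Finset.sum_congr rfl fun x _ => hswap x]
  have hval : ∀ x y : F, χ (-(x * y)) * (∑ s : F, χ ((s - x ^ 2) * (s - (-y ^ 2))))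
      = q * (if x ^ 2 = -y ^ 2 then χ (-(x * y)) else 0) - χ (-(x * y)) := by
    intro x y
    rw [sum_quad_roots hF (x ^ 2) (-y ^ 2)]
    by_cases h : x ^ 2 = -y ^ 2
    · rw [if_pos h, if_pos h]; ring
    · rw [if_neg h, if_neg h]; ring
  have hzero : ∑ x : F, ∑ y : F, χ (-(x * y)) = 0 := by
    have h : ∀ x : F, ∀ y : F, χ (-(x * y)) = χ (-x) * χ y := by
      intro x y; rw [← map_mul]; congr 1; ring
    calc ∑ x : F, ∑ y : F, χ (-(x * y)) = ∑ x : F, χ (-x) * ∑ y : F, χ y := by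
          refine Finset.sum_congr rfl fun x _ => ?_
          rw [Finset.mul_sum]
          exact Finset.sum_congr rfl fun y _ => h x y
      _ = 0 := by rw [quadraticChar_sum_zero hF]; simp
  calc ∑ x : F, ∑ y : F, χ (-(x * y)) * ∑ s : F, χ ((s - x ^ 2) * (s - (-y ^ 2)))
      = ∑ x : F, ∑ y : F, (q * (if x ^ 2 = -y ^ 2 then χ (-(x * y)) else 0) - χ (-(x * y))) := by
        exact Finset.sum_congr rfl fun x _ => Finset.sum_congr rfl fun y _ => hval x y
    _ = q * (∑ x : F, ∑ y : F, if x ^ 2 = -y ^ 2 then χ (-(x * y)) else 0)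
        - ∑ x : F, ∑ y : F, χ (-(x * y)) := by
        rw [Finset.mul_sum, ← Finset.sum_sub_distrib]
        refine Finset.sum_congr rfl fun x _ => ?_
        rw [Finset.mul_sum, ← Finset.sum_sub_distrib]
    _ = q * (q - 1) * (χ 2 + χ (-2)) := by
        rw [B0_eval hF, hzero]
        ring

lemma sum_D : ∑ s : F, Dsum F s = 0 := by
  have h := D_collapse (F := F) (fun _ => (1 : ℤ))
  simp only [mul_one] at h
  rw [h]
  exact sum_chi_mul hF

lemma scaling_vanish {g : F → ℤ} (hg : ∀ l : F, l ≠ 0 → ∀ t, g (l ^ 2 * t) = χ l * g t) :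
    ∑ s : F, Dsum F s * g s = 0 := by
  rw [D_collapse]
  obtain ⟨l, hl⟩ := quadraticChar_exists_neg_one hF
  have hl0 : l ≠ 0 := by
    intro h
    rw [h, quadraticChar_zero] at hl
    norm_num at hl
  set T := ∑ x : F, ∑ y : F, χ (x * y) * g (x ^ 2 - y ^ 2) with hT
  have inner : ∀ x : F, (∑ y : F, χ (x * y) * g (x ^ 2 - y ^ 2))
      = ∑ y : F, χ (x * (l * y)) * g (x ^ 2 - (l * y) ^ 2) := fun x =>
    (Fintype.sum_equiv (Equiv.mulLeft₀ l hl0)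
      (fun y => χ (x * (l * y)) * g (x ^ 2 - (l * y) ^ 2))
      (fun y => χ (x * y) * g (x ^ 2 - y ^ 2)) (fun y => rfl)).symm
  have outer : T = ∑ x : F, ∑ y : F, χ ((l * x) * (l * y)) * g ((l * x) ^ 2 - (l * y) ^ 2) := by
    have o1 : T = ∑ x : F, ∑ y : F, χ ((l * x) * y) * g ((l * x) ^ 2 - y ^ 2) :=
      (Fintype.sum_equiv (Equiv.mulLeft₀ l hl0)
        (fun x => ∑ y : F, χ ((l * x) * y) * g ((l * x) ^ 2 - y ^ 2))
        (fun x => ∑ y : F, χ (x * y) * g (x ^ 2 - y ^ 2)) (fun x => rfl)).symm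
    rw [o1]
    exact Finset.sum_congr rfl fun x _ => inner (l * x)
  have pointwise : ∀ x y : F, χ ((l * x) * (l * y)) * g ((l * x) ^ 2 - (l * y) ^ 2)
      = -(χ (x * y) * g (x ^ 2 - y ^ 2)) := by
    intro x y
    have e1 : (l * x) * (l * y) = l ^ 2 * (x * y) := by ring
    have e2 : (l * x) ^ 2 - (l * y) ^ 2 = l ^ 2 * (x ^ 2 - y ^ 2) := by ring
    rw [e1, e2, map_mul, quadraticChar_sq_one' hl0, one_mul, hg l hl0, hl]
    ring
  have key : T = -T := by
    nth_rewrite 1 [outer]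
    rw [Finset.sum_congr rfl fun x _ => Finset.sum_congr rfl fun y _ => pointwise x y]
    rw [← Finset.sum_neg_distrib]
    refine Finset.sum_congr rfl fun x _ => ?_
    rw [← Finset.sum_neg_distrib]
  linarith [key]

lemma card_erase_zero : ((univ.erase (0 : F)).card : ℤ) = q - 1 := by
  rw [Finset.card_erase_of_mem (mem_univ _), Finset.card_univ,
    Nat.cast_sub Fintype.card_pos]
  push_cast
  ring

lemma sum_erase_chi : ∑ s ∈ univ.erase (0 : F), χ s = 0 := by
  rw [Finset.sum_erase_eq_sub (mem_univ (0 : F)), quadraticChar_sum_zero hF,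
    quadraticChar_zero, sub_zero]

lemma sum_D_sq : ∑ s : F, Dsum F s ^ 2
    = q * (q - 1) * (1 + χ (-1)) ^ 2 + (q - 1) * Wsum F 1 ^ 2 := by
  rw [← Finset.add_sum_erase univ (fun s => Dsum F s ^ 2) (mem_univ (0 : F))]
  have h0 : Dsum F 0 ^ 2 = ((q - 1) * (1 + χ (-1))) ^ 2 := by rw [D_zero hF]
  have hpt : ∀ s ∈ univ.erase (0 : F), Dsum F s ^ 2
      = (Wsum F 1 ^ 2 + (1 + χ (-1)) ^ 2) - (2 * (1 + χ (-1)) * Wsum F 1) * χ s := by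
    intro s hs
    have hs0 : s ≠ 0 := by simpa using (Finset.mem_erase.mp hs).1
    rw [D_ne hF hs0, W_sq_gen hF s]
    have hsq : χ s ^ 2 = 1 := quadraticChar_sq_one hs0
    linear_combination Wsum F 1 ^ 2 * hsq
  rw [Finset.sum_congr rfl hpt, Finset.sum_sub_distrib, Finset.sum_const,
    ← Finset.mul_sum, sum_erase_chi hF, mul_zero, sub_zero, nsmul_eq_mul,
    card_erase_zero hF, h0]
  ring

/-! ### Evaluation of `L` -/

lemma n_eval (s : F) :
    ∑ x : F, ∑ y : F, (if x ^ 2 - y ^ 2 = s then (1 : ℤ) else 0)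
      = (q - 1) + (if s = 0 then (q : ℤ) else 0) := by
  have hinner : ∀ x : F, (∑ y : F, if x ^ 2 - y ^ 2 = s then (1 : ℤ) else 0)
      = χ (x ^ 2 - s) + 1 := by
    intro x
    rw [← sum_sqrt_count hF (x ^ 2 - s)]
    refine Finset.sum_congr rfl fun y _ => ?_
    refine if_congr ?_ rfl rfl
    constructor
    · intro h; linear_combination -h
    · intro h; linear_combination -h
  rw [Finset.sum_congr rfl fun x _ => hinner x, Finset.sum_add_distrib]
  have h2 : ∀ x : F, χ (x ^ 2 - s) = χ (x ^ 2 + (-s)) := by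
    intro x; congr 1; ring
  rw [Finset.sum_congr rfl fun x _ => h2 x, sum_sq_add hF (-s)]
  rw [Finset.sum_const, Finset.card_univ, nsmul_eq_mul]
  rcases eq_or_ne s 0 with rfl | hs
  · rw [if_pos rfl, if_pos neg_zero]; ring
  · rw [if_neg hs, if_neg (fun h => hs (neg_eq_zero.mp h))]; ring

lemma Ea_eval (s : F) :
    ∑ x : F, ∑ y : F, (if x ^ 2 - y ^ 2 = s then χ x else 0) = Wsum F s := by
  have hinner : ∀ x : F, (∑ y : F, if x ^ 2 - y ^ 2 = s then χ x else 0)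
      = χ x * (χ (x ^ 2 - s) + 1) := by
    intro x
    rw [← sum_sqrt_count hF (x ^ 2 - s), Finset.mul_sum]
    refine Finset.sum_congr rfl fun y _ => ?_
    rw [mul_ite, mul_one, mul_zero]
    refine if_congr ?_ rfl rfl
    constructor
    · intro h; linear_combination -h
    · intro h; linear_combination -h
  rw [Finset.sum_congr rfl fun x _ => hinner x]
  have h2 : ∀ x : F, χ x * (χ (x ^ 2 - s) + 1) = χ (x ^ 3 - s * x) + χ x := by
    intro x
    rw [show x ^ 3 - s * x = x * (x ^ 2 - s) by ring, map_mul]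
    ring
  rw [Finset.sum_congr rfl fun x _ => h2 x, Finset.sum_add_distrib,
    quadraticChar_sum_zero hF, add_zero, Wsum]

lemma Eb_eval (s : F) :
    ∑ x : F, ∑ y : F, (if x ^ 2 - y ^ 2 = s then χ y else 0) = Wsum F (-s) := by
  rw [Finset.sum_comm]
  have hinner : ∀ y : F, (∑ x : F, if x ^ 2 - y ^ 2 = s then χ y else 0)
      = χ y * (χ (y ^ 2 + s) + 1) := by
    intro y
    rw [← sum_sqrt_count hF (y ^ 2 + s), Finset.mul_sum]
    refine Finset.sum_congr rfl fun x _ => ?_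
    rw [mul_ite, mul_one, mul_zero]
    refine if_congr ?_ rfl rfl
    constructor
    · intro h; linear_combination h
    · intro h; linear_combination h
  rw [Finset.sum_congr rfl fun y _ => hinner y]
  have h2 : ∀ y : F, χ y * (χ (y ^ 2 + s) + 1) = χ (y ^ 3 - (-s) * y) + χ y := by
    intro y
    rw [show y ^ 3 - (-s) * y = y * (y ^ 2 + s) by ring, map_mul]
    ring
  rw [Finset.sum_congr rfl fun y _ => h2 y, Finset.sum_add_distrib,
    quadraticChar_sum_zero hF, add_zero, Wsum]

lemma L_eval (s : F) :
    Lsum F s = ((q - 1) + (if s = 0 then (q : ℤ) else 0)) + Wsum F s + Wsum F (-s)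
      + Dsum F s := by
  have hsplit : ∀ x y : F,
      (if x ^ 2 - y ^ 2 = s then (χ x + 1) * (χ y + 1) else 0)
        = (if x ^ 2 - y ^ 2 = s then (1 : ℤ) else 0)
          + ((if x ^ 2 - y ^ 2 = s then χ x else 0)
          + ((if x ^ 2 - y ^ 2 = s then χ y else 0)
          + (if x ^ 2 - y ^ 2 = s then χ (x * y) else 0))) := by
    intro x y
    split
    · rw [map_mul]; ring
    · ring
  unfold Lsum
  rw [Finset.sum_congr rfl fun x _ => Finset.sum_congr rfl fun y _ => hsplit x y]
  rw [Finset.sum_congr rfl fun x (_ : x ∈ univ) => Finset.sum_add_distrib,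
    Finset.sum_add_distrib]
  rw [Finset.sum_congr rfl fun x (_ : x ∈ univ) => Finset.sum_add_distrib,
    Finset.sum_add_distrib]
  rw [Finset.sum_congr rfl fun x (_ : x ∈ univ) => Finset.sum_add_distrib,
    Finset.sum_add_distrib]
  rw [n_eval hF s, Ea_eval hF s, Eb_eval hF s]
  rw [show (∑ x : F, ∑ y : F, if x ^ 2 - y ^ 2 = s then χ (x * y) else 0) = Dsum F s from rfl]
  ring

lemma sum_L_sq :
    ∑ s : F, Lsum F s * Lsum F (-s)
      = q ^ 3 + q ^ 2 - q + 4 * (q * (q - 1)) * (1 + χ (-1))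
        + q * (q - 1) * (1 + χ (-1)) ^ 2 + (q - 1) * Wsum F 1 ^ 2
        + 2 * (q * (q - 1)) * (χ 2 + χ (-2)) := by
  have hC2 : ∑ s : F, ((q - 1) + (if s = 0 then (q : ℤ) else 0)) ^ 2 = q ^ 3 + q ^ 2 - q := by
    have hpt : ∀ s : F, ((q - 1) + (if s = 0 then (q : ℤ) else 0)) ^ 2
        = (q - 1) ^ 2 + (3 * q ^ 2 - 2 * q) * (if s = 0 then (1 : ℤ) else 0) := by
      intro s; split <;> ring
    rw [Finset.sum_congr rfl fun s _ => hpt s, Finset.sum_add_distrib, ← Finset.mul_sum,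
      Finset.sum_ite_eq' univ (0 : F) (fun _ => (1 : ℤ)), if_pos (mem_univ _),
      Finset.sum_const, Finset.card_univ, nsmul_eq_mul]
    ring
  have hCg : ∀ g : F → ℤ, ∑ s : F, ((q - 1) + (if s = 0 then (q : ℤ) else 0)) * g s
      = (q - 1) * (∑ s : F, g s) + q * g 0 := by
    intro g
    have hpt : ∀ s : F, ((q - 1) + (if s = 0 then (q : ℤ) else 0)) * g s
        = (q - 1) * g s + q * (if s = 0 then g s else 0) := by
      intro s; split <;> ring
    rw [Finset.sum_congr rfl fun s _ => hpt s, Finset.sum_add_distrib, ← Finset.mul_sum,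
      ← Finset.mul_sum, Finset.sum_ite_eq' univ (0 : F) g, if_pos (mem_univ _)]
  have hCW : ∑ s : F, ((q - 1) + (if s = 0 then (q : ℤ) else 0)) * Wsum F s = 0 := by
    rw [hCg (fun s => Wsum F s), sum_W hF, W_zero hF]
    ring
  have hCWn : ∑ s : F, ((q - 1) + (if s = 0 then (q : ℤ) else 0)) * Wsum F (-s) = 0 := by
    rw [hCg (fun s => Wsum F (-s)), sum_neg_reindex (fun s => Wsum F s), sum_W hF]
    rw [neg_zero, W_zero hF]
    ring
  have hCD : ∑ s : F, ((q - 1) + (if s = 0 then (q : ℤ) else 0)) * Dsum F s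
      = q * ((q - 1) * (1 + χ (-1))) := by
    rw [hCg (fun s => Dsum F s), sum_D hF, D_zero hF]
    ring
  have hWn2 : ∑ s : F, Wsum F (-s) ^ 2 = q * (q - 1) * (1 + χ (-1)) := by
    rw [sum_neg_reindex (fun s => Wsum F s ^ 2), sum_W_sq hF]
  have hDW : ∑ s : F, Dsum F s * Wsum F s = 0 :=
    scaling_vanish hF (fun l hl t => W_scale hF hl t)
  have hDWn : ∑ s : F, Dsum F s * Wsum F (-s) = 0 := by
    refine scaling_vanish hF (fun l hl t => ?_)
    rw [show -(l ^ 2 * t) = l ^ 2 * (-t) by ring, W_scale hF hl]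
  have hpt : ∀ s : F, Lsum F s * Lsum F (-s)
      = ((q - 1) + (if s = 0 then (q : ℤ) else 0)) ^ 2
        + (Wsum F s ^ 2
        + (Wsum F (-s) ^ 2
        + (Dsum F s ^ 2
        + (2 * (((q - 1) + (if s = 0 then (q : ℤ) else 0)) * Wsum F s)
        + (2 * (((q - 1) + (if s = 0 then (q : ℤ) else 0)) * Wsum F (-s))
        + (2 * (((q - 1) + (if s = 0 then (q : ℤ) else 0)) * Dsum F s)
        + (2 * (Wsum F s * Wsum F (-s))
        + (2 * (Dsum F s * Wsum F s)
        + (2 * (Dsum F s * Wsum F (-s))))))))))) := by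
    intro s
    rw [L_neg, L_eval hF s]
    ring
  rw [Finset.sum_congr rfl fun s _ => hpt s]
  rw [Finset.sum_add_distrib, Finset.sum_add_distrib, Finset.sum_add_distrib,
    Finset.sum_add_distrib, Finset.sum_add_distrib, Finset.sum_add_distrib,
    Finset.sum_add_distrib, Finset.sum_add_distrib, Finset.sum_add_distrib]
  rw [← Finset.mul_sum, ← Finset.mul_sum, ← Finset.mul_sum, ← Finset.mul_sum,
    ← Finset.mul_sum, ← Finset.mul_sum]
  rw [hC2, hCW, hCWn, hCD, hWn2, hDW, hDWn, sum_W_sq hF,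
    sum_W_mul_W_neg hF, sum_D_sq hF]
  ring

end General

/-! ### Counting the affine points -/

section Counting
variable {F : Type*} [Field F] [Fintype F] [DecidableEq F] (hF : ringChar F ≠ 2)

local notation "χ" => quadraticChar F
local notation "q" => (Fintype.card F : ℤ)

instance instDecFermat : DecidablePred (FermatCond (F := F)) := fun z =>
  decidable_of_iff (z 0 ^ 4 - z 1 ^ 4 + z 2 ^ 4 - z 3 ^ 4 = 0) Iff.rfl

def e4 (F : Type*) : F × F × F × F ≃ (Fin 4 → F) where
  toFun w := ![w.1, w.2.1, w.2.2.1, w.2.2.2]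
  invFun z := (z 0, z 1, z 2, z 3)
  left_inv w := rfl
  right_inv z := by
    funext i
    fin_cases i <;> rfl

lemma card_as_sum :
    (Nat.card {z : Fin 4 → F // FermatCond z} : ℤ)
      = ∑ a : F, ∑ b : F, ∑ c : F, ∑ d : F,
          (if a ^ 4 - b ^ 4 + c ^ 4 - d ^ 4 = 0 then (1 : ℤ) else 0) := by
  rw [Nat.card_eq_fintype_card, Fintype.card_subtype, Finset.card_filter]
  push_cast
  rw [← Fintype.sum_equiv (e4 F)
    (fun w => if FermatCond (e4 F w) then (1 : ℤ) else 0)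
    (fun z => if FermatCond z then (1 : ℤ) else 0) (fun w => rfl)]
  rw [Fintype.sum_prod_type]
  refine Finset.sum_congr rfl fun a _ => ?_
  rw [Fintype.sum_prod_type]
  refine Finset.sum_congr rfl fun b _ => ?_
  rw [Fintype.sum_prod_type]
  refine Finset.sum_congr rfl fun c _ => Finset.sum_congr rfl fun d _ => ?_
  refine if_congr ?_ rfl rfl
  exact Iff.rfl

include hF

lemma quad_transform (Φ : F → F → F → F → ℤ) :
    ∑ a : F, ∑ b : F, ∑ c : F, ∑ d : F, Φ (a ^ 2) (b ^ 2) (c ^ 2) (d ^ 2)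
      = ∑ a : F, ∑ b : F, ∑ c : F, ∑ d : F,
          (χ a + 1) * ((χ b + 1) * ((χ c + 1) * ((χ d + 1) * Φ a b c d))) := by
  calc ∑ a : F, ∑ b : F, ∑ c : F, ∑ d : F, Φ (a ^ 2) (b ^ 2) (c ^ 2) (d ^ 2)
      = ∑ a : F, (χ a + 1) * (∑ b : F, ∑ c : F, ∑ d : F, Φ a (b ^ 2) (c ^ 2) (d ^ 2)) :=
        sum_sq hF (fun t => ∑ b : F, ∑ c : F, ∑ d : F, Φ t (b ^ 2) (c ^ 2) (d ^ 2))
    _ = ∑ a : F, (χ a + 1) * (∑ b : F, (χ b + 1) * (∑ c : F, ∑ d : F, Φ a b (c ^ 2) (d ^ 2))) := by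
        refine Finset.sum_congr rfl fun a _ => congrArg _ ?_
        exact sum_sq hF (fun t => ∑ c : F, ∑ d : F, Φ a t (c ^ 2) (d ^ 2))
    _ = ∑ a : F, (χ a + 1) * (∑ b : F, (χ b + 1) * (∑ c : F, (χ c + 1) *
          (∑ d : F, Φ a b c (d ^ 2)))) := by
        refine Finset.sum_congr rfl fun a _ => congrArg _ ?_
        refine Finset.sum_congr rfl fun b _ => congrArg _ ?_
        exact sum_sq hF (fun t => ∑ d : F, Φ a b t (d ^ 2))
    _ = ∑ a : F, (χ a + 1) * (∑ b : F, (χ b + 1) * (∑ c : F, (χ c + 1) *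
          (∑ d : F, (χ d + 1) * Φ a b c d))) := by
        refine Finset.sum_congr rfl fun a _ => congrArg _ ?_
        refine Finset.sum_congr rfl fun b _ => congrArg _ ?_
        refine Finset.sum_congr rfl fun c _ => congrArg _ ?_
        exact sum_sq hF (fun t => Φ a b c t)
    _ = ∑ a : F, ∑ b : F, ∑ c : F, ∑ d : F,
          (χ a + 1) * ((χ b + 1) * ((χ c + 1) * ((χ d + 1) * Φ a b c d))) := by
        simp only [Finset.mul_sum]

omit hF in
lemma fiber_split :
    ∑ a : F, ∑ b : F, ∑ c : F, ∑ d : F,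
        (χ a + 1) * ((χ b + 1) * ((χ c + 1) * ((χ d + 1)
          * (if a ^ 2 - b ^ 2 + c ^ 2 - d ^ 2 = 0 then (1 : ℤ) else 0))))
      = ∑ s : F, Lsum F s * Lsum F (-s) := by
  unfold Lsum
  have step1 : ∀ s : F,
      (∑ x : F, ∑ y : F, if x ^ 2 - y ^ 2 = s then (χ x + 1) * (χ y + 1) else 0)
        * (∑ x : F, ∑ y : F, if x ^ 2 - y ^ 2 = -s then (χ x + 1) * (χ y + 1) else 0)
      = ∑ a : F, ∑ b : F, (if a ^ 2 - b ^ 2 = s then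
          (∑ c : F, ∑ d : F, ((χ a + 1) * (χ b + 1)) *
            (if c ^ 2 - d ^ 2 = -s then (χ c + 1) * (χ d + 1) else 0)) else 0) := by
    intro s
    rw [Finset.sum_mul]
    refine Finset.sum_congr rfl fun a _ => ?_
    rw [Finset.sum_mul]
    refine Finset.sum_congr rfl fun b _ => ?_
    rw [ite_mul, zero_mul]
    refine if_congr Iff.rfl ?_ rfl
    rw [Finset.mul_sum]
    refine Finset.sum_congr rfl fun c _ => ?_
    rw [Finset.mul_sum]
  symm
  calc ∑ s : F, (∑ x : F, ∑ y : F, if x ^ 2 - y ^ 2 = s then (χ x + 1) * (χ y + 1) else 0)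
        * (∑ x : F, ∑ y : F, if x ^ 2 - y ^ 2 = -s then (χ x + 1) * (χ y + 1) else 0)
      = ∑ s : F, ∑ a : F, ∑ b : F, (if a ^ 2 - b ^ 2 = s then
          (∑ c : F, ∑ d : F, ((χ a + 1) * (χ b + 1)) *
            (if c ^ 2 - d ^ 2 = -s then (χ c + 1) * (χ d + 1) else 0)) else 0) :=
        Finset.sum_congr rfl fun s _ => step1 s
    _ = ∑ a : F, ∑ s : F, ∑ b : F, (if a ^ 2 - b ^ 2 = s then
          (∑ c : F, ∑ d : F, ((χ a + 1) * (χ b + 1)) *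
            (if c ^ 2 - d ^ 2 = -s then (χ c + 1) * (χ d + 1) else 0)) else 0) :=
        Finset.sum_comm
    _ = ∑ a : F, ∑ b : F, ∑ s : F, (if a ^ 2 - b ^ 2 = s then
          (∑ c : F, ∑ d : F, ((χ a + 1) * (χ b + 1)) *
            (if c ^ 2 - d ^ 2 = -s then (χ c + 1) * (χ d + 1) else 0)) else 0) :=
        Finset.sum_congr rfl fun a _ => Finset.sum_comm
    _ = ∑ a : F, ∑ b : F, ∑ c : F, ∑ d : F, ((χ a + 1) * (χ b + 1)) *
          (if c ^ 2 - d ^ 2 = -(a ^ 2 - b ^ 2) then (χ c + 1) * (χ d + 1) else 0) := by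
        refine Finset.sum_congr rfl fun a _ => Finset.sum_congr rfl fun b _ => ?_
        rw [Finset.sum_ite_eq univ (a ^ 2 - b ^ 2)
          (fun s => ∑ c : F, ∑ d : F, ((χ a + 1) * (χ b + 1)) *
            (if c ^ 2 - d ^ 2 = -s then (χ c + 1) * (χ d + 1) else 0)), if_pos (mem_univ _)]
    _ = ∑ a : F, ∑ b : F, ∑ c : F, ∑ d : F,
          (χ a + 1) * ((χ b + 1) * ((χ c + 1) * ((χ d + 1)
            * (if a ^ 2 - b ^ 2 + c ^ 2 - d ^ 2 = 0 then (1 : ℤ) else 0)))) := by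
        refine Finset.sum_congr rfl fun a _ => Finset.sum_congr rfl fun b _ =>
          Finset.sum_congr rfl fun c _ => Finset.sum_congr rfl fun d _ => ?_
        by_cases h : a ^ 2 - b ^ 2 + c ^ 2 - d ^ 2 = 0
        · rw [if_pos h, if_pos (by linear_combination h)]
          ring
        · rw [if_neg h, if_neg (fun hh => h (by linear_combination hh))]
          ring

lemma affine_count :
    (Nat.card {z : Fin 4 → F // FermatCond z} : ℤ) = ∑ s : F, Lsum F s * Lsum F (-s) := by
  rw [card_as_sum]
  calc ∑ a : F, ∑ b : F, ∑ c : F, ∑ d : F,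
        (if a ^ 4 - b ^ 4 + c ^ 4 - d ^ 4 = 0 then (1 : ℤ) else 0)
      = ∑ a : F, ∑ b : F, ∑ c : F, ∑ d : F,
          (if (a ^ 2) ^ 2 - (b ^ 2) ^ 2 + (c ^ 2) ^ 2 - (d ^ 2) ^ 2 = 0 then (1 : ℤ) else 0) := by
        refine Finset.sum_congr rfl fun a _ => Finset.sum_congr rfl fun b _ =>
          Finset.sum_congr rfl fun c _ => Finset.sum_congr rfl fun d _ => ?_
        refine if_congr ?_ rfl rfl
        constructor
        · intro h; linear_combination h
        · intro h; linear_combination h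
    _ = ∑ a : F, ∑ b : F, ∑ c : F, ∑ d : F,
          (χ a + 1) * ((χ b + 1) * ((χ c + 1) * ((χ d + 1)
            * (if a ^ 2 - b ^ 2 + c ^ 2 - d ^ 2 = 0 then (1 : ℤ) else 0)))) :=
        quad_transform hF
          (fun a b c d => if a ^ 2 - b ^ 2 + c ^ 2 - d ^ 2 = 0 then (1 : ℤ) else 0)
    _ = ∑ s : F, Lsum F s * Lsum F (-s) := fiber_split

end Counting

/-! ### The projective count -/

section Proj
variable {F : Type*} [Field F] [Fintype F] [DecidableEq F]

open scoped LinearAlgebra.Projectivization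

lemma FermatCond_smul (a : Fˣ) (z : Fin 4 → F) : FermatCond (a • z) ↔ FermatCond z := by
  have key : (a • z) 0 ^ 4 - (a • z) 1 ^ 4 + (a • z) 2 ^ 4 - (a • z) 3 ^ 4
      = (a : F) ^ 4 * (z 0 ^ 4 - z 1 ^ 4 + z 2 ^ 4 - z 3 ^ 4) := by
    simp only [Pi.smul_apply, Units.smul_def, smul_eq_mul]
    ring
  unfold FermatCond
  rw [key, mul_eq_zero]
  simp [pow_eq_zero_iff, a.ne_zero]

lemma FermatCond_zero : FermatCond (0 : Fin 4 → F) := by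
  unfold FermatCond
  simp

lemma proj_equiv :
    Nat.card ({z : Fin 4 → F // FermatCond z ∧ z ≠ 0})
      = Nat.card {P : ℙ F (Fin 4 → F) // FermatCond P.rep} * (Fintype.card F - 1) := by
  have hbij : Function.Bijective
      (fun Pa : {P : ℙ F (Fin 4 → F) // FermatCond P.rep} × Fˣ =>
        (⟨Pa.2 • Pa.1.1.rep,
          ⟨(FermatCond_smul Pa.2 Pa.1.1.rep).mpr Pa.1.2,
            fun h => Pa.1.1.rep_nonzero (by
              have := congrArg (fun w => Pa.2⁻¹ • w) h
              simpa using this)⟩⟩ :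
          {z : Fin 4 → F // FermatCond z ∧ z ≠ 0})) := by
    constructor
    · rintro ⟨P, a⟩ ⟨Q, b⟩ hab
      have h1 : a • P.1.rep = b • Q.1.rep := congrArg Subtype.val hab
      have hPQ : P.1 = Q.1 := by
        have h2 : (a⁻¹ * b) • Q.1.rep = P.1.rep := by
          rw [mul_smul, ← h1, inv_smul_smul]
        have h3 := (Projectivization.mk_eq_mk_iff F P.1.rep Q.1.rep
          P.1.rep_nonzero Q.1.rep_nonzero).mpr ⟨a⁻¹ * b, h2⟩
        rwa [Projectivization.mk_rep, Projectivization.mk_rep] at h3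
      have hab' : a = b := by
        rw [hPQ] at h1
        obtain ⟨j, hj⟩ := Function.ne_iff.mp Q.1.rep_nonzero
        have : (a : F) * Q.1.rep j = (b : F) * Q.1.rep j := congrFun h1 j
        exact Units.ext (mul_right_cancel₀ (by simpa using hj) this)
      rw [Prod.ext_iff]
      exact ⟨Subtype.ext hPQ, hab'⟩
    · rintro ⟨z, hz, hz0⟩
      obtain ⟨a, ha⟩ := Projectivization.exists_smul_eq_mk_rep F z hz0
      have hcond : FermatCond (Projectivization.mk F z hz0).rep := by
        rw [← ha]
        exact (FermatCond_smul a z).mpr hz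
      refine ⟨(⟨Projectivization.mk F z hz0, hcond⟩, a⁻¹), ?_⟩
      apply Subtype.ext
      show a⁻¹ • (Projectivization.mk F z hz0).rep = z
      rw [← ha, inv_smul_smul]
  have h := Nat.card_eq_of_bijective _ hbij
  rw [Nat.card_prod] at h
  rw [← h]
  congr 1
  rw [Nat.card_eq_fintype_card, Fintype.card_units]

lemma card_sub_one :
    Nat.card ({z : Fin 4 → F // FermatCond z ∧ z ≠ 0}) + 1
      = Nat.card {z : Fin 4 → F // FermatCond z} := by
  rw [Nat.card_eq_fintype_card, Nat.card_eq_fintype_card, Fintype.card_subtype,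
    Fintype.card_subtype]
  have hfil : univ.filter (fun z : Fin 4 → F => FermatCond z ∧ z ≠ 0)
      = (univ.filter (fun z : Fin 4 → F => FermatCond z)).erase 0 := by
    ext z
    simp only [Finset.mem_filter, Finset.mem_erase, Finset.mem_univ, true_and]
    tauto
  rw [hfil, Finset.card_erase_add_one]
  rw [Finset.mem_filter]
  exact ⟨mem_univ _, FermatCond_zero⟩

end Proj

end FermatQuarticAux

open FermatQuarticAux in
/-- For every odd prime `p`, writing `χ` for the quadratic residue character of `𝔽_p`,
`|F(𝔽_p)| = p² + 1 + 9p + 7χ(-1)p + 2χ(2)p + 2χ(-2)p + a_p`, where `a_p = 0` if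
`p ≡ 3 (mod 4)` and `a_p = (∑_{x ∈ 𝔽_p} χ(x³ - x))² - 2p` if `p ≡ 1 (mod 4)`. -/
theorem fermat_point_count (p : ℕ) [Fact p.Prime] (hodd : p ≠ 2) :
    (Nat.card {P : ℙ (ZMod p) (Fin 4 → ZMod p) // FermatCond P.rep} : ℤ) =
      (p : ℤ) ^ 2 + 1 + 9 * p + 7 * quadraticChar (ZMod p) (-1) * p +
        2 * quadraticChar (ZMod p) 2 * p + 2 * quadraticChar (ZMod p) (-2) * p +
        (if p % 4 = 3 then 0
          else (∑ x : ZMod p, quadraticChar (ZMod p) (x ^ 3 - x)) ^ 2 - 2 * p) := by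
  have hF : ringChar (ZMod p) ≠ 2 := by
    rw [ZMod.ringChar_zmod_n]; exact hodd
  have hq : (Fintype.card (ZMod p) : ℤ) = (p : ℤ) := by rw [ZMod.card]
  set u : ℤ := ∑ x : ZMod p, quadraticChar (ZMod p) (x ^ 3 - x) with hu
  have hW1 : Wsum (ZMod p) 1 = u := by
    rw [hu]
    exact Finset.sum_congr rfl fun x _ => by rw [one_mul]
  -- affine count
  have haff : (Nat.card {z : Fin 4 → ZMod p // FermatCond z} : ℤ)
      = (p : ℤ) ^ 3 + (p : ℤ) ^ 2 - p
        + 4 * ((p : ℤ) * ((p : ℤ) - 1)) * (1 + quadraticChar (ZMod p) (-1))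
        + (p : ℤ) * ((p : ℤ) - 1) * (1 + quadraticChar (ZMod p) (-1)) ^ 2
        + ((p : ℤ) - 1) * u ^ 2
        + 2 * ((p : ℤ) * ((p : ℤ) - 1))
          * (quadraticChar (ZMod p) 2 + quadraticChar (ZMod p) (-2)) := by
    rw [affine_count hF, sum_L_sq hF, hW1, hq]
  -- projective relation
  have hproj : (Nat.card {P : ℙ (ZMod p) (Fin 4 → ZMod p) // FermatCond P.rep} : ℤ)
      * ((p : ℤ) - 1)
      = (Nat.card {z : Fin 4 → ZMod p // FermatCond z} : ℤ) - 1 := by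
    have h1 := proj_equiv (F := ZMod p)
    have h2 := card_sub_one (F := ZMod p)
    have hp1 : 1 ≤ Fintype.card (ZMod p) := Fintype.card_pos
    have h1' := congrArg (Nat.cast : ℕ → ℤ) h1
    have h2' := congrArg (Nat.cast : ℕ → ℤ) h2
    push_cast [Nat.cast_sub hp1] at h1' h2'
    rw [hq] at h1'
    linarith [h1', h2']
  have hp2 : (2 : ℕ) ≤ p := (Fact.out : p.Prime).two_le
  have hpne : ((p : ℤ) - 1) ≠ 0 := by
    have : (2 : ℤ) ≤ (p : ℤ) := by exact_mod_cast hp2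
    linarith
  apply mul_right_cancel₀ hpne
  rw [hproj, haff]
  -- case analysis on p % 4
  have hm2 : quadraticChar (ZMod p) (-2)
      = quadraticChar (ZMod p) (-1) * quadraticChar (ZMod p) 2 := by
    rw [← map_mul]; norm_num
  have hmod : p % 4 = 1 ∨ p % 4 = 3 := by
    have := (Fact.out : p.Prime).two_le
    have hodd' : p % 2 = 1 := Nat.odd_iff.mp ((Fact.out : p.Prime).odd_of_ne_two hodd)
    omega
  rcases hmod with h4 | h4
  · -- p ≡ 1 mod 4
    have hsq : IsSquare (-1 : ZMod p) := ZMod.exists_sq_eq_neg_one_iff.mpr (by omega)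
    have hneg1 : (-1 : ZMod p) ≠ 0 := by
      intro h
      exact (one_ne_zero : (1 : ZMod p) ≠ 0) (by linear_combination -h)
    have hchi : quadraticChar (ZMod p) (-1) = 1 :=
      (quadraticChar_one_iff_isSquare hneg1).mpr hsq
    rw [if_neg (by omega), hchi, hm2, hchi]
    ring
  · -- p ≡ 3 mod 4
    have hsq : ¬IsSquare (-1 : ZMod p) := by
      intro h
      exact absurd (ZMod.exists_sq_eq_neg_one_iff.mp h) (by omega)
    have hchi : quadraticChar (ZMod p) (-1) = -1 :=
      quadraticChar_neg_one_iff_not_isSquare.mpr hsq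
    have hu0 : u = 0 := by
      have := chi_neg_one_mul_W1 hF
      rw [hW1, hchi] at this
      linarith
    rw [if_pos h4, hchi, hm2, hchi, hu0]
    ring
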